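/- Once a trap becomes full, it remains full indefinitely: every transition from a configuration in which the trap is full (saturated and occupied by at least m+1 agents) yields a configuration in which the trap is still full, even when agents may arrive at the gate state from outside. -/
import Mathlib


open Classical Finset

/-- An ordered pair of distinct agents (initiator, responder) chosen by the scheduler. -/
abbrev SchedPair (n : ℕ) : Type := {p : Fin n × Fin n // p.1 ≠ p.2}

/-- One interaction step: the scheduler selects the ordered pair `p` of distinct agents
(initiator `p.1.1`, responder `p.1.2`) and they update their states via the
transition function `δ`. -/
def pstep {S : Type} {n : ℕ} (δ : S → S → S × S) (c : Fin n → S) (p : SchedPair n) :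
    Fin n → S := fun a =>
  if a = p.1.1 then (δ (c p.1.1) (c p.1.2)).1
  else if a = p.1.2 then (δ (c p.1.1) (c p.1.2)).2
  else c a

/-- The configuration after the first `t` interactions of the finite schedule `σ`. -/
def configAt {S : Type} {n T : ℕ} (δ : S → S → S × S) (c0 : Fin n → S)
    (σ : Fin T → SchedPair n) (t : ℕ) : Fin n → S :=
  ((List.ofFn σ).take t).foldl (pstep δ) c0

/-- Probability of the event `E` under the uniform random scheduler running for
`T` interactions (interactions are drawn independently and uniformly at random). -/
noncomputable def schedPr {n : ℕ} (T : ℕ) (E : (Fin T → SchedPair n) → Prop) : ℝ :=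
  (((Finset.univ : Finset (Fin T → SchedPair n)).filter fun σ => E σ).card : ℝ) /
    ((Finset.univ : Finset (Fin T → SchedPair n)).card : ℝ)

/-- The infinite trajectory generated by the schedule `σ` from configuration `c0`. -/
def ptraj {S : Type} {n : ℕ} (δ : S → S → S × S) (c0 : Fin n → S)
    (σ : ℕ → SchedPair n) : ℕ → Fin n → S
  | 0 => c0
  | t + 1 => pstep δ (ptraj δ c0 σ t) (σ t)

/-- Once a trap becomes full (saturated, i.e. every inner state is
occupied, and at least `m+1` agents occupy the trap's states), it remains full
after every single transition, even when other rules may send agents into the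
trap's gate state from outside. -/
theorem trap_full_stays_full
    {S : Type} {m N : ℕ} (trap : Fin (m + 1) ↪ S) (Y : S) (δ : S → S → S × S)
    (hY : ∀ i, Y ≠ trap i)
    (hinner : ∀ i : Fin (m + 1), i ≠ 0 → δ (trap i) (trap i) = (trap i, trap (i - 1)))
    (hgate : δ (trap 0) (trap 0) = (trap (Fin.last m), Y))
    (honly : ∀ s t : S, s ≠ t → ((∃ i, s = trap i) ∨ (∃ i, t = trap i)) → δ s t = (s, t))
    (c : Fin N → S) (p : SchedPair N)
    (hsat : ∀ i : Fin (m + 1), i ≠ 0 → ∃ a, c a = trap i)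
    (hcount : m + 1 ≤ ((Finset.univ : Finset (Fin N)).filter fun a => ∃ i, c a = trap i).card) :
    (∀ i : Fin (m + 1), i ≠ 0 → ∃ a, pstep δ c p a = trap i) ∧
      m + 1 ≤ ((Finset.univ : Finset (Fin N)).filter fun a => ∃ i, pstep δ c p a = trap i).card := by
  have hne : p.1.1 ≠ p.1.2 := p.2
  have hoff : ∀ a, a ≠ p.1.1 → a ≠ p.1.2 → pstep δ c p a = c a := by
    intro a h1 h2
    simp [pstep, h1, h2]
  have e1 : pstep δ c p p.1.1 = (δ (c p.1.1) (c p.1.2)).1 := by simp [pstep]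
  have e2 : pstep δ c p p.1.2 = (δ (c p.1.1) (c p.1.2)).2 := by
    simp [pstep, Ne.symm hne]
  by_cases Htrap : (∃ j, c p.1.1 = trap j) ∨ (∃ j, c p.1.2 = trap j)
  · by_cases hst : c p.1.1 = c p.1.2
    · -- both agents in the same trap state `trap i`
      have hi' : ∃ i, c p.1.1 = trap i := by
        rcases Htrap with h | h
        · exact h
        · exact hst ▸ h
      obtain ⟨i, hi⟩ := hi'
      have hi2 : c p.1.2 = trap i := hst ▸ hi
      by_cases hi0 : i = 0
      · -- gate rule
        have hδ : δ (c p.1.1) (c p.1.2) = (trap (Fin.last m), Y) := by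
          rw [hi, hi2, hi0]; exact hgate
        have e1' : pstep δ c p p.1.1 = trap (Fin.last m) := by rw [e1, hδ]
        have e2' : pstep δ c p p.1.2 = Y := by rw [e2, hδ]
        have hwit : ∀ j : Fin (m + 1), j ≠ 0 → ∃ a, a ≠ p.1.1 ∧ a ≠ p.1.2 ∧ c a = trap j := by
          intro j hj
          obtain ⟨a, ha⟩ := hsat j hj
          refine ⟨a, ?_, ?_, ha⟩
          · intro h
            apply hj
            apply trap.injective
            rw [← ha, h, hi, hi0]
          · intro h
            apply hj
            apply trap.injective
            rw [← ha, h, hi2, hi0]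
        constructor
        · intro j hj
          obtain ⟨a, h1, h2, ha⟩ := hwit j hj
          exact ⟨a, by rw [hoff a h1 h2, ha]⟩
        · -- count: inject Fin (m+1) into the trap agents of the new config
          classical
          set w : Fin (m + 1) → Fin N := fun j =>
            if h : j = 0 then p.1.1 else Classical.choose (hwit j h) with hw
          have hcw : ∀ j (h : j ≠ 0), c (w j) = trap j := by
            intro j h
            simp only [hw, dif_neg h]
            exact (Classical.choose_spec (hwit j h)).2.2
          have hmem : ∀ j, w j ∈ (Finset.univ : Finset (Fin N)).filter
              fun a => ∃ i, pstep δ c p a = trap i := by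
            intro j
            simp only [Finset.mem_filter, Finset.mem_univ, true_and]
            by_cases h : j = 0
            · refine ⟨Fin.last m, ?_⟩
              simp only [hw, dif_pos h]
              exact e1'
            · obtain ⟨a1, a2, _⟩ := Classical.choose_spec (hwit j h)
              refine ⟨j, ?_⟩
              simp only [hw, dif_neg h]
              rw [hoff _ a1 a2]
              exact (Classical.choose_spec (hwit j h)).2.2
          have hinj : Set.InjOn w (Finset.univ : Finset (Fin (m + 1))) := by
            intro j _ k _ hjk
            by_cases hj : j = 0 <;> by_cases hk : k = 0
            · rw [hj, hk]
            · exfalso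
              apply hk
              apply trap.injective
              have : c (w j) = c (w k) := by rw [hjk]
              rw [hcw k hk] at this
              simp only [hw, dif_pos hj] at this
              rw [hi, hi0] at this
              exact this.symm
            · exfalso
              apply hj
              apply trap.injective
              have : c (w j) = c (w k) := by rw [hjk]
              rw [hcw j hj] at this
              simp only [hw, dif_pos hk] at this
              rw [hi, hi0] at this
              exact this
            · apply trap.injective
              rw [← hcw j hj, ← hcw k hk, hjk]
          have := Finset.card_le_card_of_injOn w (fun j _ => hmem j) hinj
          simpa using this
      · -- inner rule
        have hδ : δ (c p.1.1) (c p.1.2) = (trap i, trap (i - 1)) := by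
          rw [hi, hi2]; exact hinner i hi0
        have e1' : pstep δ c p p.1.1 = trap i := by rw [e1, hδ]
        have e2' : pstep δ c p p.1.2 = trap (i - 1) := by rw [e2, hδ]
        constructor
        · intro j hj
          by_cases hji : j = i
          · exact ⟨p.1.1, by rw [e1', hji]⟩
          · obtain ⟨a, ha⟩ := hsat j hj
            have h1 : a ≠ p.1.1 := by
              intro h
              exact hji (trap.injective (by rw [← ha, h, hi]))
            have h2 : a ≠ p.1.2 := by
              intro h
              exact hji (trap.injective (by rw [← ha, h, hi2]))
            exact ⟨a, by rw [hoff a h1 h2, ha]⟩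
        · refine le_trans hcount (Finset.card_le_card ?_)
          intro a ha
          simp only [Finset.mem_filter, Finset.mem_univ, true_and] at ha ⊢
          by_cases h1 : a = p.1.1
          · exact ⟨i, by rw [h1, e1']⟩
          by_cases h2 : a = p.1.2
          · exact ⟨i - 1, by rw [h2, e2']⟩
          obtain ⟨k, hk⟩ := ha
          exact ⟨k, by rw [hoff a h1 h2, hk]⟩
    · -- distinct states, one in trap: no-op rule
      have hδ : δ (c p.1.1) (c p.1.2) = (c p.1.1, c p.1.2) := honly _ _ hst Htrap
      have hcc : pstep δ c p = c := by
        funext a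
        by_cases h1 : a = p.1.1
        · rw [h1, e1, hδ]
        by_cases h2 : a = p.1.2
        · rw [h2, e2, hδ]
        exact hoff a h1 h2
      rw [hcc]
      exact ⟨hsat, hcount⟩
  · -- neither agent is in a trap state
    push_neg at Htrap
    obtain ⟨H1, H2⟩ := Htrap
    constructor
    · intro j hj
      obtain ⟨a, ha⟩ := hsat j hj
      have h1 : a ≠ p.1.1 := fun h => H1 j (h ▸ ha)
      have h2 : a ≠ p.1.2 := fun h => H2 j (h ▸ ha)
      exact ⟨a, by rw [hoff a h1 h2, ha]⟩
    · refine le_trans hcount (Finset.card_le_card ?_)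
      intro a ha
      simp only [Finset.mem_filter, Finset.mem_univ, true_and] at ha ⊢
      obtain ⟨k, hk⟩ := ha
      have h1 : a ≠ p.1.1 := fun h => H1 k (h ▸ hk)
      have h2 : a ≠ p.1.2 := fun h => H2 k (h ▸ hk)
      exact ⟨k, by rw [hoff a h1 h2, hk]⟩
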